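/- Let G be a countable group generated by a finite symmetric set S, and let μ be a symmetric probability measure whose support is S. If the drift l(μ) = 0 (i.e. the growth of word lengths along the walk is slower than linear), then the entropy h(G, μ) = 0. -/

import Mathlib

open Filter

/-- The word length of `g` with respect to a generating set `S`. -/
noncomputable def wordLength {G : Type*} [Group G] (S : Set G) (g : G) : ℕ :=
  sInf {n | ∃ w : List G, (∀ x ∈ w, x ∈ S) ∧ w.length = n ∧ w.prod = g}

/-- The sphere of radius `n`: elements of word length exactly `n`. -/
def wordSphere {G : Type*} [Group G] (S : Set G) (n : ℕ) : Set G :=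
  {g | wordLength S g = n}

/-- Shannon entropy `H(ν) = −Σ_g ν(g) log ν(g)` (natural logarithm, `0 log 0 = 0`). -/
noncomputable def shannonEntropy {G : Type*} (ν : G → ℝ) : ℝ :=
  -∑ᶠ g, ν g * Real.log (ν g)

/-- Convolution of two densities on a group: `(ν₁ * ν₂)(g) = Σ_{ab = g} ν₁(a) ν₂(b)`. -/
noncomputable def convMeas {G : Type*} [Group G] (ν₁ ν₂ : G → ℝ) : G → ℝ :=
  fun g => ∑ᶠ a, ν₁ a * ν₂ (a⁻¹ * g)

/-- The `n`-fold convolution `μ^{*n}` of a density `μ` with itself. -/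
noncomputable def convPow {G : Type*} [Group G] (μ : G → ℝ) : ℕ → G → ℝ
  | 0 => Set.indicator {(1 : G)} (fun _ => (1 : ℝ))
  | n + 1 => convMeas (convPow μ n) μ

/-- `l_n(μ) = Σ_g μ^{*n}(g) l_S(g)`, the expected word length after `n` steps. -/
noncomputable def meanLength {G : Type*} [Group G] (S : Set G) (μ : G → ℝ) (n : ℕ) : ℝ :=
  ∑ᶠ g, convPow μ n g * (wordLength S g : ℝ)

section Aux
open Function Pointwise
variable {G : Type*} [Group G] {S : Set G} {μ : G → ℝ}

private lemma exists_word (hSsym : ∀ s ∈ S, s⁻¹ ∈ S) (hSgen : Subgroup.closure S = ⊤) (g : G) :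
    ∃ w : List G, (∀ x ∈ w, x ∈ S) ∧ w.prod = g := by
  have hg : g ∈ Subgroup.closure S := by rw [hSgen]; trivial
  induction hg using Subgroup.closure_induction with
  | mem x hx => exact ⟨[x], by simp [hx]⟩
  | one => exact ⟨[], by simp⟩
  | mul x y _ _ hx hy =>
      obtain ⟨w1, h1, p1⟩ := hx
      obtain ⟨w2, h2, p2⟩ := hy
      exact ⟨w1 ++ w2, by
        constructor
        · intro a ha; rcases List.mem_append.1 ha with h | h
          exacts [h1 a h, h2 a h]
        · simp [p1, p2]⟩
  | inv x _ hx =>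
      obtain ⟨w, hw, pw⟩ := hx
      refine ⟨(w.map (·⁻¹)).reverse, ?_, ?_⟩
      · intro a ha
        simp only [List.mem_reverse, List.mem_map] at ha
        obtain ⟨b, hb, rfl⟩ := ha
        exact hSsym b (hw b hb)
      · rw [← List.prod_inv_reverse, pw]

private lemma wordLength_le (g : G) {w : List G} (hw : ∀ x ∈ w, x ∈ S) (pw : w.prod = g) :
    wordLength S g ≤ w.length :=
  Nat.sInf_le ⟨w, hw, rfl, pw⟩

private lemma exists_min_word (hSsym : ∀ s ∈ S, s⁻¹ ∈ S) (hSgen : Subgroup.closure S = ⊤)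
    (g : G) :
    ∃ w : List G, (∀ x ∈ w, x ∈ S) ∧ w.length = wordLength S g ∧ w.prod = g := by
  obtain ⟨w, hw, pw⟩ := exists_word hSsym hSgen g
  have hne : {n | ∃ w : List G, (∀ x ∈ w, x ∈ S) ∧ w.length = n ∧ w.prod = g}.Nonempty :=
    ⟨w.length, w, hw, rfl, pw⟩
  exact Nat.sInf_mem hne

private lemma wordLength_one : wordLength S (1 : G) = 0 :=
  Nat.le_zero.1 (wordLength_le 1 (w := []) (by simp) (by simp))

private lemma wordLength_mul_le (hSsym : ∀ s ∈ S, s⁻¹ ∈ S) (hSgen : Subgroup.closure S = ⊤)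
    (g : G) {s : G} (hs : s ∈ S) :
    wordLength S (g * s) ≤ wordLength S g + 1 := by
  obtain ⟨w, hw, lw, pw⟩ := exists_min_word hSsym hSgen g
  have := wordLength_le (S := S) (g * s) (w := w ++ [s]) ?_ (by simp [pw])
  · simpa [lw] using this
  · intro x hx; rcases List.mem_append.1 hx with h | h
    · exact hw x h
    · simp at h; subst h; exact hs

private lemma wordSphere_succ_subset (hSsym : ∀ s ∈ S, s⁻¹ ∈ S)
    (hSgen : Subgroup.closure S = ⊤) (k : ℕ) :
    wordSphere S (k + 1) ⊆ wordSphere S k * S := by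
  intro g hg
  obtain ⟨w, hw, lw, pw⟩ := exists_min_word hSsym hSgen (S := S) g
  have hgk : wordLength S g = k + 1 := hg
  have hwne : w ≠ [] := by
    intro h; rw [h] at lw; simp [hgk] at lw
  set a := w.dropLast.prod with ha
  have hlast : w.dropLast ++ [w.getLast hwne] = w := List.dropLast_append_getLast hwne
  have hprod : a * w.getLast hwne = g := by
    conv_rhs => rw [← pw, ← hlast]
    rw [List.prod_append, List.prod_singleton]
  have hlastS : w.getLast hwne ∈ S := hw _ (List.getLast_mem hwne)
  have hdrop : ∀ x ∈ w.dropLast, x ∈ S := fun x hx => hw x (List.dropLast_subset w hx)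
  have h1 : wordLength S a ≤ k := by
    have := wordLength_le a hdrop rfl
    rwa [List.length_dropLast, lw, hgk, Nat.add_sub_cancel] at this
  have h2 : k ≤ wordLength S a := by
    by_contra hlt
    push_neg at hlt
    obtain ⟨u, hu, lu, pu⟩ := exists_min_word hSsym hSgen (S := S) a
    have := wordLength_le (S := S) g (w := u ++ [w.getLast hwne]) ?_ (by simp [pu, hprod])
    · rw [hgk] at this; simp [lu] at this; omega
    · intro x hx; rcases List.mem_append.1 hx with h | h
      · exact hu x h
      · simp at h; subst h; exact hlastS
  exact ⟨a, le_antisymm h1 h2, w.getLast hwne, hlastS, hprod⟩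

private lemma wordSphere_zero_subset (hSsym : ∀ s ∈ S, s⁻¹ ∈ S)
    (hSgen : Subgroup.closure S = ⊤) : wordSphere S 0 ⊆ {1} := by
  intro g hg
  obtain ⟨w, hw, lw, pw⟩ := exists_min_word hSsym hSgen (S := S) g
  have : w = [] := List.length_eq_zero_iff.1 (by rw [lw]; exact hg)
  simp [this] at pw; simp [← pw]

private lemma wordSphere_bound (hSfin : S.Finite) (hSsym : ∀ s ∈ S, s⁻¹ ∈ S)
    (hSgen : Subgroup.closure S = ⊤) (k : ℕ) :
    (wordSphere S k).Finite ∧ (wordSphere S k).ncard ≤ S.ncard ^ k := by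
  induction k with
  | zero =>
      refine ⟨(Set.finite_singleton 1).subset (wordSphere_zero_subset hSsym hSgen), ?_⟩
      simpa using Set.ncard_le_ncard (wordSphere_zero_subset hSsym hSgen)
        (Set.finite_singleton 1)
  | succ k ih =>
      obtain ⟨hfin, hcard⟩ := ih
      have hsub := wordSphere_succ_subset hSsym hSgen (S := S) k
      have hmulfin : (wordSphere S k * S).Finite := hfin.mul hSfin
      refine ⟨hmulfin.subset hsub, ?_⟩
      have h1 : (wordSphere S (k+1)).ncard ≤ (wordSphere S k * S).ncard :=
        Set.ncard_le_ncard hsub hmulfin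
      have h2 : (wordSphere S k * S).ncard ≤ (wordSphere S k).ncard * S.ncard :=
        Set.natCard_mul_le
      calc (wordSphere S (k+1)).ncard ≤ (wordSphere S k).ncard * S.ncard := h1.trans h2
        _ ≤ S.ncard ^ k * S.ncard := Nat.mul_le_mul_right _ hcard
        _ = S.ncard ^ (k+1) := (pow_succ _ _).symm

private lemma ball_finite (hSfin : S.Finite) (hSsym : ∀ s ∈ S, s⁻¹ ∈ S)
    (hSgen : Subgroup.closure S = ⊤) (n : ℕ) :
    {g : G | wordLength S g ≤ n}.Finite := by
  have : {g : G | wordLength S g ≤ n} = ⋃ k ∈ Set.Iic n, wordSphere S k := by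
    ext g
    simp only [Set.mem_setOf_eq, Set.mem_iUnion, Set.mem_Iic, exists_prop]
    exact ⟨fun hg => ⟨_, hg, rfl⟩, fun ⟨k, hk, he⟩ => he ▸ hk⟩
  rw [this]
  exact (Set.finite_Iic n).biUnion fun k _ => (wordSphere_bound hSfin hSsym hSgen k).1

private lemma convPow_bundle (hSfin : S.Finite) (hSsym : ∀ s ∈ S, s⁻¹ ∈ S)
    (hSgen : Subgroup.closure S = ⊤)
    (hpos : ∀ g, 0 ≤ μ g) (hsum : ∑ᶠ g, μ g = 1) (hsupp : Function.support μ = S) (n : ℕ) :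
    (∀ g, 0 ≤ convPow μ n g) ∧ (support (convPow μ n)).Finite ∧
      (∑ᶠ g, convPow μ n g = 1) ∧ (∀ g, convPow μ n g ≠ 0 → wordLength S g ≤ n) := by
  induction n with
  | zero =>
      refine ⟨fun g => Set.indicator_nonneg (fun _ _ => zero_le_one) g, ?_, ?_, ?_⟩
      · exact (Set.finite_singleton 1).subset Set.support_indicator_subset
      · rw [show (convPow μ 0 : G → ℝ) = Set.indicator {(1:G)} (fun _ => (1:ℝ)) from rfl,
          ← finsum_mem_def, finsum_mem_singleton]
      · intro g hg
        have : g ∈ ({1} : Set G) := Set.support_indicator_subset hg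
        simp at this; simp [this, wordLength_one]
  | succ n ih =>
      obtain ⟨ih0, ihfin, ihsum, ihlen⟩ := ih
      have hconv : ∀ g, convPow μ (n+1) g = ∑ᶠ a, convPow μ n a * μ (a⁻¹ * g) := fun g => rfl
      have hterm : ∀ g a, 0 ≤ convPow μ n a * μ (a⁻¹ * g) :=
        fun g a => mul_nonneg (ih0 a) (hpos _)
      have htermsupp : ∀ g,
          support (fun a => convPow μ n a * μ (a⁻¹ * g)) ⊆ support (convPow μ n) := by
        intro g a ha
        exact fun h => ha (by simp [h])
      have h0 : ∀ g, 0 ≤ convPow μ (n+1) g := by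
        intro g; rw [hconv]; exact finsum_nonneg (hterm g)
      have hlen : ∀ g, convPow μ (n+1) g ≠ 0 → wordLength S g ≤ n + 1 := by
        intro g hg
        rw [hconv] at hg
        have : ∃ a, convPow μ n a * μ (a⁻¹ * g) ≠ 0 := by
          by_contra hc; push_neg at hc
          exact hg (finsum_eq_zero_of_forall_eq_zero hc)
        obtain ⟨a, ha⟩ := this
        have ha1 : convPow μ n a ≠ 0 := fun h => ha (by simp [h])
        have ha2 : a⁻¹ * g ∈ S := hsupp ▸ (fun h => ha (by simp [h]) : μ (a⁻¹ * g) ≠ 0)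
        have := wordLength_mul_le hSsym hSgen a ha2
        rw [show a * (a⁻¹ * g) = g by group] at this
        exact this.trans (Nat.add_le_add_right (ihlen a ha1) 1)
      have hfin : (support (convPow μ (n+1))).Finite :=
        (ball_finite hSfin hSsym hSgen (n+1)).subset (fun g hg => hlen g hg)
      refine ⟨h0, hfin, ?_, hlen⟩
      classical
      set Tn := ihfin.toFinset with hTn
      set U := hfin.toFinset with hU
      have hsum_g : ∀ g, convPow μ (n+1) g = ∑ a ∈ Tn, convPow μ n a * μ (a⁻¹ * g) := by
        intro g
        rw [hconv]
        exact finsum_eq_sum_of_support_subset _ (by simpa [hTn] using htermsupp g)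
      have h1 : ∑ᶠ g, convPow μ (n+1) g = ∑ g ∈ U, convPow μ (n+1) g :=
        finsum_eq_sum_of_support_subset _ (by simp [hU])
      have hinner : ∀ a ∈ Tn, ∑ g ∈ U, μ (a⁻¹ * g) = 1 := by
        intro a haT
        have han : convPow μ n a ≠ 0 := by
          rw [hTn] at haT; exact (ihfin.mem_toFinset).1 haT
        have hsub : support (fun g => μ (a⁻¹ * g)) ⊆ ↑U := by
          intro g hg
          have hgpos : 0 < convPow μ n a * μ (a⁻¹ * g) :=
            lt_of_le_of_ne (hterm g a) (Ne.symm (mul_ne_zero han hg))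
          have hle : convPow μ n a * μ (a⁻¹ * g) ≤ convPow μ (n+1) g := by
            rw [hconv]
            exact single_le_finsum a (ihfin.subset (htermsupp g)) (hterm g)
          have : convPow μ (n+1) g ≠ 0 := ne_of_gt (lt_of_lt_of_le hgpos hle)
          simp [hU, this]
        calc ∑ g ∈ U, μ (a⁻¹ * g) = ∑ᶠ g, μ (a⁻¹ * g) :=
              (finsum_eq_sum_of_support_subset _ hsub).symm
          _ = ∑ᶠ g, μ g := finsum_comp_equiv (Equiv.mulLeft a⁻¹)
          _ = 1 := hsum
      calc ∑ᶠ g, convPow μ (n+1) g = ∑ g ∈ U, ∑ a ∈ Tn, convPow μ n a * μ (a⁻¹ * g) := by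
            rw [h1]; exact Finset.sum_congr rfl fun g _ => hsum_g g
        _ = ∑ a ∈ Tn, ∑ g ∈ U, convPow μ n a * μ (a⁻¹ * g) := Finset.sum_comm
        _ = ∑ a ∈ Tn, convPow μ n a * ∑ g ∈ U, μ (a⁻¹ * g) := by
            simp_rw [Finset.mul_sum]
        _ = ∑ a ∈ Tn, convPow μ n a := by
            refine Finset.sum_congr rfl fun a ha => ?_
            rw [hinner a ha, mul_one]
        _ = ∑ᶠ a, convPow μ n a :=
            (finsum_eq_sum_of_support_subset _ (by simp [hTn])).symm
        _ = 1 := ihsum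

private lemma geom_half_sum (N : ℕ) :
    ∑ k ∈ Finset.range N, (1/2:ℝ)^(k+1) = 1 - (1/2)^N := by
  induction N with
  | zero => simp
  | succ N ih => rw [Finset.sum_range_succ, ih]; ring

private lemma gibbs_step {x q : ℝ} (hx : 0 < x) (hq : 0 < q) :
    -(x * Real.log x) ≤ -(x * Real.log q) + (q - x) := by
  have h := Real.log_le_sub_one_of_pos (div_pos hq hx)
  rw [Real.log_div hq.ne' hx.ne'] at h
  have h2 := mul_le_mul_of_nonneg_left h hx.le
  have h3 : x * (q / x - 1) = q - x := by field_simp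
  nlinarith

private lemma entropy_nonneg (hSfin : S.Finite) (hSsym : ∀ s ∈ S, s⁻¹ ∈ S)
    (hSgen : Subgroup.closure S = ⊤)
    (hpos : ∀ g, 0 ≤ μ g) (hsum : ∑ᶠ g, μ g = 1) (hsupp : Function.support μ = S) (n : ℕ) :
    0 ≤ shannonEntropy (convPow μ n) := by
  obtain ⟨h0, hfin, hs1, _⟩ := convPow_bundle hSfin hSsym hSgen hpos hsum hsupp n
  classical
  have hH : shannonEntropy (convPow μ n)
      = -∑ g ∈ hfin.toFinset, convPow μ n g * Real.log (convPow μ n g) := by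
    rw [shannonEntropy]
    congr 1
    refine finsum_eq_sum_of_support_subset _ ?_
    intro g hg
    have : convPow μ n g ≠ 0 := fun hz => hg (by simp [hz])
    simp [this]
  rw [hH, neg_nonneg]
  refine Finset.sum_nonpos fun g hg => ?_
  have hle : convPow μ n g ≤ 1 := by
    rw [← hs1]; exact single_le_finsum g hfin h0
  have := Real.log_nonpos (h0 g) hle
  nlinarith [h0 g]

private lemma entropy_le (hSfin : S.Finite) (hSsym : ∀ s ∈ S, s⁻¹ ∈ S)
    (hSgen : Subgroup.closure S = ⊤)
    (hpos : ∀ g, 0 ≤ μ g) (hsum : ∑ᶠ g, μ g = 1) (hsupp : Function.support μ = S) (n : ℕ) :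
    shannonEntropy (convPow μ n)
      ≤ Real.log (2 * S.ncard) * meanLength S μ n + Real.log 2 := by
  obtain ⟨h0, hfin, hs1, hlen⟩ := convPow_bundle hSfin hSsym hSgen hpos hsum hsupp n
  classical
  set ν := convPow μ n with hν
  set T := hfin.toFinset with hT
  have hSne : S.Nonempty := by
    rw [← hsupp, Function.support_nonempty_iff]
    intro hz
    rw [hz] at hsum; simp at hsum
  have hm : 0 < (S.ncard : ℝ) := by
    have := Set.ncard_pos hSfin |>.2 hSne
    exact_mod_cast this
  set m : ℝ := (S.ncard : ℝ) with hmdef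
  have h2m : (0:ℝ) < 2 * m := by linarith
  set C := Real.log (2 * m) with hC
  set q : G → ℝ := fun g => (1/(2*m))^(wordLength S g) * (1/2) with hqdef
  have hq : ∀ g, 0 < q g := fun g => by positivity
  have hlogq : ∀ g, Real.log (q g) = -((wordLength S g : ℝ) * C + Real.log 2) := by
    intro g
    rw [hqdef]
    simp only []
    rw [Real.log_mul (by positivity) (by norm_num), Real.log_pow,
      one_div, one_div, Real.log_inv, Real.log_inv, hC]
    ring
  have hH : shannonEntropy ν = -∑ g ∈ T, ν g * Real.log (ν g) := by
    rw [shannonEntropy]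
    congr 1
    refine finsum_eq_sum_of_support_subset _ ?_
    intro g hg
    have : ν g ≠ 0 := fun hz => hg (by simp [hz])
    simp [hT, this]
  have hL : meanLength S μ n = ∑ g ∈ T, ν g * (wordLength S g : ℝ) := by
    rw [meanLength]
    refine finsum_eq_sum_of_support_subset _ ?_
    intro g hg
    have : ν g ≠ 0 := fun hz => hg (by simp [show convPow μ n g = 0 from hz])
    simp [hT, this]
  have hsT : ∑ g ∈ T, ν g = 1 := by
    rw [← hs1]
    exact (finsum_eq_sum_of_support_subset _ (by simp [hT])).symm
  -- sub-probability bound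
  have hqsum : ∑ g ∈ T, q g ≤ 1 := by
    have hmaps : ∀ g ∈ T, wordLength S g ∈ Finset.range (n+1) := by
      intro g hg
      rw [Finset.mem_range, Nat.lt_succ_iff]
      exact hlen g ((hfin.mem_toFinset).1 hg)
    rw [← Finset.sum_fiberwise_of_maps_to hmaps q]
    have hfiber : ∀ k ∈ Finset.range (n+1),
        ∑ g ∈ T.filter (fun g => wordLength S g = k), q g ≤ (1/2:ℝ)^(k+1) := by
      intro k _
      have hconst : ∑ g ∈ T.filter (fun g => wordLength S g = k), q g
          = (T.filter (fun g => wordLength S g = k)).card * ((1/(2*m))^k * (1/2)) := by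
        rw [Finset.sum_congr rfl (fun g hg => ?_), Finset.sum_const, nsmul_eq_mul]
        have : wordLength S g = k := (Finset.mem_filter.1 hg).2
        rw [hqdef]; simp only []; rw [this]
      rw [hconst]
      have hcard : ((T.filter (fun g => wordLength S g = k)).card : ℝ) ≤ m ^ k := by
        have hsub : ↑(T.filter (fun g => wordLength S g = k)) ⊆ wordSphere S k := by
          intro g hg
          simp only [Finset.coe_filter, Set.mem_setOf_eq] at hg
          exact hg.2
        have hc1 : (T.filter (fun g => wordLength S g = k)).card
            ≤ (wordSphere S k).ncard := by
          rw [← Set.ncard_coe_finset]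
          exact Set.ncard_le_ncard hsub (wordSphere_bound hSfin hSsym hSgen k).1
        have hc2 := (wordSphere_bound hSfin hSsym hSgen k).2
        calc ((T.filter (fun g => wordLength S g = k)).card : ℝ)
            ≤ ((wordSphere S k).ncard : ℝ) := by exact_mod_cast hc1
          _ ≤ ((S.ncard ^ k : ℕ) : ℝ) := by exact_mod_cast hc2
          _ = m ^ k := by push_cast [hmdef]; ring
      have hpos' : (0:ℝ) ≤ (1/(2*m))^k * (1/2) := by positivity
      calc ((T.filter (fun g => wordLength S g = k)).card : ℝ) * ((1/(2*m))^k * (1/2))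
          ≤ m ^ k * ((1/(2*m))^k * (1/2)) := mul_le_mul_of_nonneg_right hcard hpos'
        _ = (1/2:ℝ)^(k+1) := by
            rw [div_pow, one_pow, mul_pow]
            field_simp
            rw [pow_succ, mul_mul_mul_comm, ← mul_pow]; norm_num
    calc ∑ k ∈ Finset.range (n+1), ∑ g ∈ T.filter (fun g => wordLength S g = k), q g
        ≤ ∑ k ∈ Finset.range (n+1), (1/2:ℝ)^(k+1) := Finset.sum_le_sum hfiber
      _ = 1 - (1/2:ℝ)^(n+1) := geom_half_sum (n+1)
      _ ≤ 1 := by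
          have : (0:ℝ) ≤ (1/2:ℝ)^(n+1) := by positivity
          linarith
  -- Gibbs inequality termwise
  have hstep : ∀ g ∈ T, -(ν g * Real.log (ν g))
      ≤ ν g * ((wordLength S g : ℝ) * C + Real.log 2) + (q g - ν g) := by
    intro g hg
    have hνpos : 0 < ν g :=
      lt_of_le_of_ne (h0 g) (Ne.symm ((hfin.mem_toFinset).1 hg))
    have := gibbs_step hνpos (hq g)
    rw [hlogq g] at this
    linarith [this]
  calc shannonEntropy ν = ∑ g ∈ T, -(ν g * Real.log (ν g)) := by
        rw [hH, ← Finset.sum_neg_distrib]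
    _ ≤ ∑ g ∈ T, (ν g * ((wordLength S g : ℝ) * C + Real.log 2) + (q g - ν g)) :=
        Finset.sum_le_sum hstep
    _ = C * (∑ g ∈ T, ν g * (wordLength S g : ℝ)) + Real.log 2 * (∑ g ∈ T, ν g)
        + ((∑ g ∈ T, q g) - ∑ g ∈ T, ν g) := by
        rw [Finset.mul_sum, Finset.mul_sum, ← Finset.sum_add_distrib,
          ← Finset.sum_sub_distrib, ← Finset.sum_add_distrib]
        exact Finset.sum_congr rfl fun g _ => by ring
    _ = C * meanLength S μ n + Real.log 2 + ((∑ g ∈ T, q g) - 1) := by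
        rw [hL, hsT]; ring
    _ ≤ C * meanLength S μ n + Real.log 2 := by linarith
end Aux

/-- If the drift `l(μ)` is zero, then the entropy `h(G, μ)` is zero. -/
theorem entropy_eq_zero_of_drift_eq_zero {G : Type*} [Group G] [Countable G] [Infinite G]
    (S : Set G)
    (hSfin : S.Finite) (hSsym : ∀ s ∈ S, s⁻¹ ∈ S) (hSone : (1 : G) ∉ S)
    (hSgen : Subgroup.closure S = ⊤)
    (μ : G → ℝ) (hpos : ∀ g, 0 ≤ μ g) (hsum : ∑ᶠ g, μ g = 1)
    (hμsym : ∀ g, μ g = μ g⁻¹) (hsupp : Function.support μ = S)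
    (v h : ℝ)
    (hv : Tendsto (fun n : ℕ => Real.log ((wordSphere S n).ncard : ℝ) / (n : ℝ)) atTop
      (nhds v))
    (hh : Tendsto (fun n : ℕ => shannonEntropy (convPow μ n) / (n : ℝ)) atTop (nhds h))
    (hl : Tendsto (fun n : ℕ => meanLength S μ n / (n : ℝ)) atTop (nhds 0)) :
    h = 0 := by
  set C := Real.log (2 * S.ncard) with hC
  have hub : ∀ᶠ n : ℕ in atTop, shannonEntropy (convPow μ n) / (n : ℝ)
      ≤ C * (meanLength S μ n / (n : ℝ)) + Real.log 2 / (n : ℝ) := by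
    filter_upwards [eventually_ge_atTop 1] with n hn
    have hnpos : (0:ℝ) < (n : ℝ) := by exact_mod_cast hn
    have hb := entropy_le hSfin hSsym hSgen hpos hsum hsupp n
    calc shannonEntropy (convPow μ n) / (n : ℝ)
        ≤ (C * meanLength S μ n + Real.log 2) / (n : ℝ) := by gcongr
      _ = C * (meanLength S μ n / (n : ℝ)) + Real.log 2 / (n : ℝ) := by
          rw [add_div, mul_div_assoc]
  have htend : Tendsto (fun n : ℕ => C * (meanLength S μ n / (n : ℝ)) + Real.log 2 / (n : ℝ))
      atTop (nhds 0) := by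
    have h1 : Tendsto (fun n : ℕ => C * (meanLength S μ n / (n : ℝ))) atTop (nhds (C * 0)) :=
      hl.const_mul C
    have h2 : Tendsto (fun n : ℕ => Real.log 2 / (n : ℝ)) atTop (nhds 0) :=
      tendsto_const_div_atTop_nhds_zero_nat _
    simpa using h1.add h2
  have hle : h ≤ 0 := le_of_tendsto_of_tendsto hh htend hub
  have hge : 0 ≤ h := by
    refine ge_of_tendsto hh ?_
    filter_upwards with n
    exact div_nonneg (entropy_nonneg hSfin hSsym hSgen hpos hsum hsupp n) (Nat.cast_nonneg n)
  linarith
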